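/- Let X_1, X_2, … be pairwise uncorrelated complex-valued random variables with E[X_i] = 0 and V[X_i] ≤ C uniformly bounded. Then S_n = X_1 + ⋯ + X_n satisfies S_n(ω) = o(n^{1/2} (log n)^{3/2+ε}) almost surely for every ε > 0. -/

import Mathlib

open MeasureTheory Filter Topology
open scoped ENNReal

section Aux

variable {Ω : Type*} [MeasurableSpace Ω] {P : Measure Ω}

lemma memlp_conj {f : Ω → ℂ} (hf : MemLp f 2 P) :
    MemLp (fun ω => (starRingEnd ℂ) (f ω)) 2 P := by
  refine ⟨Complex.continuous_conj.comp_aestronglyMeasurable hf.1, ?_⟩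
  have : eLpNorm (fun ω => (starRingEnd ℂ) (f ω)) 2 P = eLpNorm f 2 P :=
    eLpNorm_congr_norm_ae (Eventually.of_forall fun ω => by simp)
  rw [this]
  exact hf.2

lemma integrable_conj_mul {f g : Ω → ℂ} (hf : MemLp f 2 P) (hg : MemLp g 2 P) :
    Integrable (fun ω => (starRingEnd ℂ) (f ω) * g ω) P := by
  have h : MemLp ((fun ω => (starRingEnd ℂ) (f ω)) • g) 1 P :=
    hg.smul (memlp_conj hf) (hpqr := ⟨by simp [ENNReal.inv_two_add_inv_two]⟩)
  rw [memLp_one_iff_integrable] at h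
  exact h

lemma ortho {X : ℕ → Ω → ℂ} (hL2 : ∀ i, MemLp (X i) 2 P)
    (huncorr : ∀ i j, i ≠ j → ∫ ω, (starRingEnd ℂ) (X i ω) * X j ω ∂P = 0)
    (s : Finset ℕ) :
    ∫ ω, ‖∑ i ∈ s, X i ω‖ ^ 2 ∂P = ∑ i ∈ s, ∫ ω, ‖X i ω‖ ^ 2 ∂P := by
  have hint : ∀ i j : ℕ, Integrable (fun ω => (starRingEnd ℂ) (X i ω) * X j ω) P :=
    fun i j => integrable_conj_mul (hL2 i) (hL2 j)
  have key : ((∫ ω, ‖∑ i ∈ s, X i ω‖ ^ 2 ∂P : ℝ) : ℂ)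
      = ((∑ i ∈ s, ∫ ω, ‖X i ω‖ ^ 2 ∂P : ℝ) : ℂ) := by
    calc ((∫ ω, ‖∑ i ∈ s, X i ω‖ ^ 2 ∂P : ℝ) : ℂ)
        = ∫ ω, ((‖∑ i ∈ s, X i ω‖ ^ 2 : ℝ) : ℂ) ∂P := integral_ofReal.symm
      _ = ∫ ω, ∑ i ∈ s, ∑ j ∈ s, (starRingEnd ℂ) (X i ω) * X j ω ∂P := by
          congr 1
          funext ω
          rw [← Finset.sum_mul_sum, ← map_sum, RCLike.conj_mul]
          norm_cast
      _ = ∑ i ∈ s, ∑ j ∈ s, ∫ ω, (starRingEnd ℂ) (X i ω) * X j ω ∂P := by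
          rw [integral_finset_sum _ (fun i _ => integrable_finset_sum s (fun j _ => hint i j))]
          exact Finset.sum_congr rfl fun i _ => integral_finset_sum _ (fun j _ => hint i j)
      _ = ∑ i ∈ s, ∫ ω, (starRingEnd ℂ) (X i ω) * X i ω ∂P :=
          Finset.sum_congr rfl fun i hi =>
            Finset.sum_eq_single_of_mem i hi (fun j _ hj => huncorr i j (Ne.symm hj))
      _ = ∑ i ∈ s, ((∫ ω, ‖X i ω‖ ^ 2 ∂P : ℝ) : ℂ) := by
          refine Finset.sum_congr rfl fun i _ => ?_
          rw [show (fun ω => (starRingEnd ℂ) (X i ω) * X i ω)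
              = fun ω => ((‖X i ω‖ ^ 2 : ℝ) : ℂ) from funext fun ω => by
            rw [RCLike.conj_mul]; norm_cast]
          exact integral_ofReal
      _ = ((∑ i ∈ s, ∫ ω, ‖X i ω‖ ^ 2 ∂P : ℝ) : ℂ) := by push_cast; ring
  exact_mod_cast key

end Aux


lemma chain (a : ℕ → ℂ) (M n : ℕ) (hn : n ≤ 2^M) :
    ‖∑ i ∈ Finset.Ioc 0 n, a i‖ ≤ ∑ j ∈ Finset.range (M+1),
      Real.sqrt (∑ k ∈ Finset.range (2^(M-j)+1),
        ‖∑ i ∈ Finset.Ioc (2^j*k) (2^j*(k+1)), a i‖^2) := by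
  set s : ℕ → ℂ := fun m => ∑ i ∈ Finset.Ioc 0 m, a i with hs
  set b : ℕ → ℕ := fun j => 2^j * (n / 2^j) with hb
  have hb0 : b 0 = n := by simp [hb]
  have hbM : b (M+1) = 0 := by
    have : n < 2^(M+1) := lt_of_le_of_lt hn (Nat.pow_lt_pow_right one_lt_two (Nat.lt_succ_self M))
    simp [hb, Nat.div_eq_of_lt this]
  have tele : s n = ∑ j ∈ Finset.range (M+1), (s (b j) - s (b (j+1))) := by
    rw [Finset.sum_range_sub' (fun j => s (b j)), hb0, hbM]
    simp [hs]
  have hblock : ∀ c d : ℕ, c ≤ d → s d - s c = ∑ i ∈ Finset.Ioc c d, a i := by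
    intro c d hcd
    have hu : Finset.Ioc 0 c ∪ Finset.Ioc c d = Finset.Ioc 0 d :=
      Finset.Ioc_union_Ioc_eq_Ioc (Nat.zero_le c) hcd
    have hdisj : Disjoint (Finset.Ioc 0 c) (Finset.Ioc c d) := by
      rw [Finset.disjoint_left]
      intro x hx hx'
      exact absurd (Finset.mem_Ioc.mp hx').1 (not_lt.mpr (Finset.mem_Ioc.mp hx).2)
    have := Finset.sum_union (f := a) hdisj
    rw [hu] at this
    simp only [hs, this]
    ring
  rw [show (∑ i ∈ Finset.Ioc 0 n, a i) = s n from rfl, tele]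
  refine le_trans (norm_sum_le _ _) (Finset.sum_le_sum fun j hj => ?_)
  have hjM : j ≤ M := Nat.lt_succ_iff.mp (Finset.mem_range.mp hj)
  set q : ℕ := n / 2^j with hq
  have hdiv : n / 2^(j+1) = q / 2 := by
    rw [pow_succ, ← Nat.div_div_eq_div_mul]
  have hbj1 : b (j+1) = 2^j * (2 * (q/2)) := by
    show 2^(j+1) * (n / 2^(j+1)) = 2^j * (2 * (q/2))
    rw [hdiv, pow_succ]
    ring
  rcases Nat.even_or_odd q with he | ho
  · -- even: b j = b (j+1), difference is zero
    obtain ⟨r, hr⟩ := he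
    have : b j = b (j+1) := by
      rw [hbj1]
      show 2^j * (n / 2^j) = 2^j * (2 * (q/2))
      congr 1
      omega
    rw [this]
    simp only [sub_self, norm_zero]
    positivity
  · -- odd: q = 2*(q/2)+1
    obtain ⟨r, hr⟩ := ho
    have hq2 : q = 2*(q/2) + 1 := by omega
    set k : ℕ := 2 * (q/2) with hk
    have hbj : b j = 2^j * (k+1) := by
      show 2^j * (n / 2^j) = 2^j * (k+1)
      rw [← hq, hq2]
    have hle : b (j+1) ≤ b j := by
      rw [hbj, hbj1]
      exact Nat.mul_le_mul_left _ (Nat.le_succ k)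
    have hdiff : s (b j) - s (b (j+1)) = ∑ i ∈ Finset.Ioc (2^j*k) (2^j*(k+1)), a i := by
      rw [hblock _ _ hle, hbj, hbj1]
    rw [hdiff]
    have hkmem : k ∈ Finset.range (2^(M-j)+1) := by
      have h1 : k ≤ q := by omega
      have h2 : q ≤ 2^(M-j) := by
        rw [hq]
        calc n / 2^j ≤ 2^M / 2^j := Nat.div_le_div_right hn
          _ = 2^(M-j) := Nat.pow_div hjM (by norm_num)
      exact Finset.mem_range.mpr (by omega)
    calc ‖∑ i ∈ Finset.Ioc (2^j*k) (2^j*(k+1)), a i‖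
        = Real.sqrt (‖∑ i ∈ Finset.Ioc (2^j*k) (2^j*(k+1)), a i‖^2) :=
          (Real.sqrt_sq (norm_nonneg _)).symm
      _ ≤ _ := Real.sqrt_le_sqrt (Finset.single_le_sum
          (fun k _ => sq_nonneg ‖∑ i ∈ Finset.Ioc (2^j*k) (2^j*(k+1)), a i‖) hkmem)

section Main

variable {Ω : Type*} [MeasurableSpace Ω]

/-- The Rademacher–Menshov dominating functional. -/
noncomputable def Rfun (X : ℕ → Ω → ℂ) (M : ℕ) (ω : Ω) : ℝ :=
  ∑ j ∈ Finset.range (M+1), Real.sqrt (∑ k ∈ Finset.range (2^(M-j)+1),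
    ‖∑ i ∈ Finset.Ioc (2^j*k) (2^j*(k+1)), X i ω‖^2)

theorem main {P : Measure Ω} [IsProbabilityMeasure P]
    (X : ℕ → Ω → ℂ) (C : ℝ)
    (hL2 : ∀ i, MemLp (X i) 2 P)
    (hvar : ∀ i, ∫ ω, ‖X i ω‖ ^ 2 ∂P ≤ C)
    (huncorr : ∀ i j, i ≠ j → ∫ ω, (starRingEnd ℂ) (X i ω) * X j ω ∂P = 0)
    (ε : ℝ) (hε : 0 < ε) :
    ∀ᵐ ω ∂P, Tendsto
      (fun n : ℕ => (∑ i ∈ Finset.Icc 1 n, X i ω) /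
        ((((n : ℝ) ^ ((1:ℝ)/2) * Real.log n ^ ((3:ℝ)/2 + ε) : ℝ)) : ℂ))
      atTop (𝓝 0) := by
  set p : ℝ := (3:ℝ)/2 + ε with hpdef
  have hp : 0 < p := by positivity
  have hC0 : 0 ≤ C := le_trans (integral_nonneg fun ω => by positivity) (hvar 0)
  set d : ℕ → ℝ := fun M => (2:ℝ)^M * ((M:ℝ)+1)^(2*p) with hddef
  have hd : ∀ M, 0 < d M := fun M => by positivity
  set g : ℕ → Ω → ℝ := fun M ω => (Rfun X M ω)^2 / d M with hgdef
  have hgnn : ∀ M ω, 0 ≤ g M ω := fun M ω => by positivity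
  -- a.e. convergence of `g M ω` to zero
  have hae : ∀ᵐ ω ∂P, Tendsto (fun M => g M ω) atTop (𝓝 0) := by
    have hXm : ∀ i, AEStronglyMeasurable (X i) P := fun i => (hL2 i).1
    have hBm : ∀ j k : ℕ, AEStronglyMeasurable
        (fun ω => ∑ i ∈ Finset.Ioc (2^j*k) (2^j*(k+1)), X i ω) P :=
      fun j k => Finset.aestronglyMeasurable_fun_sum _ fun i _ => hXm i
    have hB2 : ∀ j k : ℕ,
        Integrable (fun ω => ‖∑ i ∈ Finset.Ioc (2^j*k) (2^j*(k+1)), X i ω‖^2) P :=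
      fun j k => ((memLp_finset_sum _ fun i _ => hL2 i).norm).integrable_sq
    have hB2le : ∀ j k : ℕ,
        ∫ ω, ‖∑ i ∈ Finset.Ioc (2^j*k) (2^j*(k+1)), X i ω‖^2 ∂P ≤ C * 2^j := by
      intro j k
      rw [ortho hL2 huncorr]
      have hcard : (Finset.Ioc (2^j*k) (2^j*(k+1))).card = 2^j := by
        rw [Nat.card_Ioc, Nat.mul_succ, Nat.add_sub_cancel_left]
      calc ∑ i ∈ Finset.Ioc (2^j*k) (2^j*(k+1)), ∫ ω, ‖X i ω‖^2 ∂P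
          ≤ (Finset.Ioc (2^j*k) (2^j*(k+1))).card • C :=
            Finset.sum_le_card_nsmul _ _ _ fun i _ => hvar i
        _ = C * 2^j := by rw [hcard, nsmul_eq_mul]; push_cast; ring
    have hRm : ∀ M, AEStronglyMeasurable (fun ω => (Rfun X M ω)^2) P := by
      intro M
      have h1 : AEStronglyMeasurable (fun ω => Rfun X M ω) P := by
        apply Finset.aestronglyMeasurable_fun_sum
        intro j _
        apply aestronglyMeasurable_iff_aemeasurable.mpr
        apply Real.continuous_sqrt.measurable.comp_aemeasurable
        apply Finset.aemeasurable_fun_sum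
        intro k _
        exact ((hBm j k).norm.aemeasurable).pow_const 2
      exact aestronglyMeasurable_iff_aemeasurable.mpr (h1.aemeasurable.pow_const 2)
    have hRsq : ∀ M ω, (Rfun X M ω)^2 ≤ ((M:ℝ)+1) *
        ∑ j ∈ Finset.range (M+1), ∑ k ∈ Finset.range (2^(M-j)+1),
          ‖∑ i ∈ Finset.Ioc (2^j*k) (2^j*(k+1)), X i ω‖^2 := by
      intro M ω
      have h1 := sq_sum_le_card_mul_sum_sq (s := Finset.range (M+1))
        (f := fun j => Real.sqrt (∑ k ∈ Finset.range (2^(M-j)+1),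
          ‖∑ i ∈ Finset.Ioc (2^j*k) (2^j*(k+1)), X i ω‖^2))
      rw [Finset.card_range] at h1
      refine le_trans h1 ?_
      have h2 : ((M+1 : ℕ) : ℝ) = (M:ℝ)+1 := by push_cast; ring
      rw [h2]
      refine mul_le_mul_of_nonneg_left (Finset.sum_le_sum fun j _ => ?_) (by positivity)
      rw [Real.sq_sqrt (by positivity)]
    have hbound : ∀ M : ℕ, Integrable (fun ω => ((M:ℝ)+1) *
        ∑ j ∈ Finset.range (M+1), ∑ k ∈ Finset.range (2^(M-j)+1),
          ‖∑ i ∈ Finset.Ioc (2^j*k) (2^j*(k+1)), X i ω‖^2) P := by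
      intro M
      exact (integrable_finset_sum _ fun j _ =>
        integrable_finset_sum _ fun k _ => hB2 j k).const_mul _
    have hRint : ∀ M, Integrable (fun ω => (Rfun X M ω)^2) P := by
      intro M
      refine Integrable.mono' (hbound M) (hRm M) (Eventually.of_forall fun ω => ?_)
      rw [Real.norm_of_nonneg (sq_nonneg _)]
      exact hRsq M ω
    have hRI : ∀ M, ∫ ω, (Rfun X M ω)^2 ∂P ≤ C * ((M:ℝ)+1)^2 * 2^(M+1) := by
      intro M
      have h1 : ∫ ω, (Rfun X M ω)^2 ∂P ≤ ∫ ω, ((M:ℝ)+1) *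
          ∑ j ∈ Finset.range (M+1), ∑ k ∈ Finset.range (2^(M-j)+1),
            ‖∑ i ∈ Finset.Ioc (2^j*k) (2^j*(k+1)), X i ω‖^2 ∂P :=
        integral_mono (hRint M) (hbound M) (fun ω => hRsq M ω)
      refine le_trans h1 ?_
      rw [integral_const_mul, integral_finset_sum _
        (fun j _ => integrable_finset_sum _ fun k _ => hB2 j k)]
      have h2 : ∀ j ∈ Finset.range (M+1),
          ∫ ω, ∑ k ∈ Finset.range (2^(M-j)+1),
            ‖∑ i ∈ Finset.Ioc (2^j*k) (2^j*(k+1)), X i ω‖^2 ∂P ≤ C * 2^(M+1) := by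
        intro j hj
        have hjM : j ≤ M := Nat.lt_succ_iff.mp (Finset.mem_range.mp hj)
        rw [integral_finset_sum _ (fun k _ => hB2 j k)]
        calc ∑ k ∈ Finset.range (2^(M-j)+1),
              ∫ ω, ‖∑ i ∈ Finset.Ioc (2^j*k) (2^j*(k+1)), X i ω‖^2 ∂P
            ≤ ∑ _k ∈ Finset.range (2^(M-j)+1), C * 2^j :=
              Finset.sum_le_sum fun k _ => hB2le j k
          _ = ((2^(M-j)+1 : ℕ) : ℝ) * (C * 2^j) := by
              rw [Finset.sum_const, Finset.card_range, nsmul_eq_mul]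
          _ ≤ C * 2^(M+1) := by
              have hn : (2^(M-j)+1) * 2^j ≤ 2^(M+1) := by
                have : 2^(M-j) * 2^j = 2^M := by
                  rw [← pow_add]
                  congr 1
                  omega
                have h2j : (2:ℕ)^j ≤ 2^M := Nat.pow_le_pow_right (by norm_num) hjM
                calc (2^(M-j)+1) * 2^j = 2^(M-j) * 2^j + 2^j := by ring
                  _ ≤ 2^M + 2^M := by omega
                  _ = 2^(M+1) := by ring
              calc ((2^(M-j)+1 : ℕ) : ℝ) * (C * 2^j)
                  = C * (((2^(M-j)+1) * 2^j : ℕ) : ℝ) := by push_cast; ring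
                _ ≤ C * ((2^(M+1) : ℕ) : ℝ) := by
                    exact mul_le_mul_of_nonneg_left (by exact_mod_cast hn) hC0
                _ = C * 2^(M+1) := by push_cast; ring
      calc ((M:ℝ)+1) * ∑ j ∈ Finset.range (M+1),
            ∫ ω, ∑ k ∈ Finset.range (2^(M-j)+1),
              ‖∑ i ∈ Finset.Ioc (2^j*k) (2^j*(k+1)), X i ω‖^2 ∂P
          ≤ ((M:ℝ)+1) * ∑ _j ∈ Finset.range (M+1), C * 2^(M+1) :=
            mul_le_mul_of_nonneg_left (Finset.sum_le_sum h2) (by positivity)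
        _ = C * ((M:ℝ)+1)^2 * 2^(M+1) := by
            rw [Finset.sum_const, Finset.card_range, nsmul_eq_mul]
            push_cast
            ring
    -- integral of g M
    have hgI : ∀ M, ∫ ω, g M ω ∂P ≤ 2 * C * ((M:ℝ)+1) ^ (-(1+2*ε)) := by
      intro M
      have h1 : ∫ ω, g M ω ∂P = (∫ ω, (Rfun X M ω)^2 ∂P) / d M := by
        rw [hgdef]
        exact integral_div _ _
      rw [h1, div_le_iff₀ (hd M)]
      refine le_trans (hRI M) (le_of_eq ?_)
      rw [hddef]
      have hM1 : (0:ℝ) < (M:ℝ)+1 := by positivity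
      have h2 : ((M:ℝ)+1) ^ (-(1+2*ε)) * ((M:ℝ)+1)^(2*p) = ((M:ℝ)+1)^2 := by
        rw [← Real.rpow_add hM1]
        have : -(1+2*ε) + 2*p = 2 := by rw [hpdef]; ring
        rw [this]
        rw [show ((2:ℝ) : ℝ) = ((2:ℕ) : ℝ) by norm_num, Real.rpow_natCast]
      calc C * ((M:ℝ)+1)^2 * 2^(M+1)
          = 2 * C * (((M:ℝ)+1) ^ (-(1+2*ε)) * ((M:ℝ)+1)^(2*p)) * 2^M := by
            rw [h2]; ring
        _ = 2 * C * ((M:ℝ)+1) ^ (-(1+2*ε)) * ((2:ℝ)^M * ((M:ℝ)+1)^(2*p)) := by ring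
    -- the ENNReal-valued series
    set F : ℕ → Ω → ℝ≥0∞ := fun M ω => ENNReal.ofReal (g M ω) with hFdef
    have hFm : ∀ M, AEMeasurable (F M) P := by
      intro M
      exact ENNReal.measurable_ofReal.comp_aemeasurable
        (((hRm M).aemeasurable).div_const _)
    have hFI : ∀ M, ∫⁻ ω, F M ω ∂P = ENNReal.ofReal (∫ ω, g M ω ∂P) := by
      intro M
      exact (ofReal_integral_eq_lintegral_ofReal ((hRint M).div_const _)
        (Eventually.of_forall fun ω => hgnn M ω)).symm
    have hsummable : Summable (fun M : ℕ => 2 * C * ((M:ℝ)+1) ^ (-(1+2*ε))) := by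
      apply Summable.mul_left
      have h1 : Summable (fun n : ℕ => (n:ℝ) ^ (-(1+2*ε))) :=
        Real.summable_nat_rpow.mpr (by linarith)
      have h2 := h1.comp_injective Nat.succ_injective
      refine h2.congr fun n => ?_
      simp only [Function.comp_apply]
      push_cast
      ring_nf
    have htsum : ∑' M, ∫⁻ ω, F M ω ∂P < ⊤ := by
      calc ∑' M, ∫⁻ ω, F M ω ∂P
          ≤ ∑' M : ℕ, ENNReal.ofReal (2 * C * ((M:ℝ)+1) ^ (-(1+2*ε))) := by
            refine ENNReal.tsum_le_tsum fun M => ?_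
            rw [hFI M]
            exact ENNReal.ofReal_le_ofReal (hgI M)
        _ = ENNReal.ofReal (∑' M : ℕ, 2 * C * ((M:ℝ)+1) ^ (-(1+2*ε))) :=
            (ENNReal.ofReal_tsum_of_nonneg (fun M => by positivity) hsummable).symm
        _ < ⊤ := ENNReal.ofReal_lt_top
    have hlt : ∀ᵐ ω ∂P, ∑' M, F M ω < ⊤ := by
      refine ae_lt_top' (AEMeasurable.ennreal_tsum hFm) ?_
      rw [lintegral_tsum hFm]
      exact htsum.ne
    filter_upwards [hlt] with ω hω
    have hsum2 : Summable (fun M => (F M ω).toReal) := ENNReal.summable_toReal hω.ne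
    have hsum3 : Summable (fun M => g M ω) := by
      refine hsum2.congr fun M => ?_
      rw [hFdef]
      exact ENNReal.toReal_ofReal (hgnn M ω)
    exact hsum3.tendsto_atTop_zero
  filter_upwards [hae] with ω htend
  set K2 : ℝ := 1 / Real.log 2 + 2 with hK2def
  have hlog2 : 0 < Real.log 2 := Real.log_pos (by norm_num)
  have hK2 : 0 < K2 := by positivity
  set K : ℝ := Real.sqrt 2 * K2 ^ p with hKdef
  have hms : Tendsto (fun n : ℕ => Nat.log 2 n + 1) atTop atTop := by
    refine tendsto_atTop_atTop.mpr fun b => ⟨2^b, fun n hn => ?_⟩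
    have h1 : Nat.log 2 (2^b) ≤ Nat.log 2 n := Nat.log_mono_right hn
    rw [Nat.log_pow (by norm_num)] at h1
    omega
  have hbnd : Tendsto (fun n : ℕ => K * Real.sqrt (g (Nat.log 2 n + 1) ω)) atTop (𝓝 0) := by
    have h1 : Tendsto (fun M => Real.sqrt (g M ω)) atTop (𝓝 0) := by
      have h2 := (Real.continuous_sqrt.tendsto 0).comp htend
      simpa [Real.sqrt_zero, Function.comp_def] using h2
    have h3 := (h1.comp hms).const_mul K
    simpa using h3
  rw [tendsto_zero_iff_norm_tendsto_zero]
  refine squeeze_zero' (Eventually.of_forall fun n => norm_nonneg _) ?_ hbnd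
  filter_upwards [eventually_ge_atTop 3] with n hn3
  set M : ℕ := Nat.log 2 n + 1 with hMdef
  have hn0 : 0 < n := by omega
  have hlogn : 1 ≤ Real.log n := by
    rw [Real.le_log_iff_exp_le (by positivity)]
    have h1 : Real.exp 1 < 2.7182818286 := Real.exp_one_lt_d9
    have h3 : (3:ℝ) ≤ (n:ℝ) := by exact_mod_cast hn3
    linarith
  have hcn : 0 < (n:ℝ) ^ ((1:ℝ)/2) * Real.log n ^ p :=
    mul_pos (Real.rpow_pos_of_pos (by positivity) _)
      (Real.rpow_pos_of_pos (by linarith) _)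
  have hn2M : n ≤ 2^M := (Nat.lt_pow_succ_log_self (by norm_num) n).le
  have hS : ‖∑ i ∈ Finset.Icc 1 n, X i ω‖ ≤ Rfun X M ω := by
    have h1 := chain (fun i => X i ω) M n hn2M
    rw [show Finset.Icc 1 n = Finset.Ioc 0 n from Finset.Icc_add_one_left_eq_Ioc 0 n]
    exact h1
  have hR0 : 0 ≤ Rfun X M ω :=
    Finset.sum_nonneg fun j _ => Real.sqrt_nonneg _
  have hRfactor : Rfun X M ω = Real.sqrt (g M ω) * Real.sqrt (d M) := by
    rw [← Real.sqrt_mul (hgnn M ω), hgdef]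
    simp only
    rw [div_mul_cancel₀ _ (hd M).ne']
    exact (Real.sqrt_sq hR0).symm
  have hsplit : Real.sqrt (d M) = Real.sqrt ((2:ℝ)^M) * ((M:ℝ)+1)^p := by
    rw [hddef]
    simp only
    rw [Real.sqrt_mul (by positivity)]
    congr 1
    have h1 : ((M:ℝ)+1)^(2*p) = (((M:ℝ)+1)^p)^(2:ℕ) := by
      rw [← Real.rpow_natCast (((M:ℝ)+1)^p) 2, ← Real.rpow_mul (by positivity)]
      norm_num
      rw [mul_comm]
    rw [h1, Real.sqrt_sq (Real.rpow_nonneg (by positivity) _)]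
  have h2M : ((2:ℝ)^M) ≤ 2*(n:ℝ) := by
    have h1 : (2:ℕ)^M ≤ 2*n := by
      rw [hMdef, pow_succ]
      have h2 := Nat.pow_log_le_self 2 hn0.ne'
      omega
    calc ((2:ℝ)^M) = (((2:ℕ)^M : ℕ) : ℝ) := by push_cast; ring
      _ ≤ ((2*n : ℕ) : ℝ) := by exact_mod_cast h1
      _ = 2*(n:ℝ) := by push_cast; ring
  have hsq2M : Real.sqrt ((2:ℝ)^M) ≤ Real.sqrt 2 * (n:ℝ)^((1:ℝ)/2) := by
    calc Real.sqrt ((2:ℝ)^M) ≤ Real.sqrt (2*(n:ℝ)) := Real.sqrt_le_sqrt h2M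
      _ = Real.sqrt 2 * Real.sqrt (n:ℝ) := Real.sqrt_mul (by norm_num) _
      _ = Real.sqrt 2 * (n:ℝ)^((1:ℝ)/2) := by
          rw [show Real.sqrt (n:ℝ) = (n:ℝ)^((1:ℝ)/2) from Real.sqrt_eq_rpow _]
  have hMp : ((M:ℝ)+1)^p ≤ K2^p * Real.log n ^ p := by
    have hlogle : (Nat.log 2 n : ℝ) * Real.log 2 ≤ Real.log n := by
      have h1 : ((2:ℝ))^(Nat.log 2 n) ≤ (n:ℝ) := by
        exact_mod_cast Nat.pow_log_le_self 2 hn0.ne'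
      calc (Nat.log 2 n : ℝ) * Real.log 2
          = Real.log ((2:ℝ)^(Nat.log 2 n)) := by
            rw [Real.log_pow]
        _ ≤ Real.log n := Real.log_le_log (by positivity) h1
    have hM1 : (M:ℝ)+1 ≤ K2 * Real.log n := by
      have h3 : (M:ℝ)+1 = (Nat.log 2 n : ℝ) + 2 := by rw [hMdef]; push_cast; ring
      have h2 : (Nat.log 2 n : ℝ) ≤ Real.log n / Real.log 2 := by
        rw [le_div_iff₀ hlog2]; exact hlogle
      rw [h3, hK2def]
      have h4 : Real.log n / Real.log 2 + 2 * Real.log n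
          = (1/Real.log 2 + 2) * Real.log n := by ring
      linarith
    calc ((M:ℝ)+1)^p ≤ (K2 * Real.log n)^p :=
          Real.rpow_le_rpow (by positivity) hM1 hp.le
      _ = K2^p * Real.log n ^ p := Real.mul_rpow hK2.le (by linarith)
  have hnorm : ‖(((n:ℝ) ^ ((1:ℝ)/2) * Real.log n ^ p : ℝ) : ℂ)‖
      = (n:ℝ) ^ ((1:ℝ)/2) * Real.log n ^ p := by
    rw [Complex.norm_real, Real.norm_eq_abs, abs_of_pos hcn]
  rw [norm_div, hnorm, div_le_iff₀ hcn]
  calc ‖∑ i ∈ Finset.Icc 1 n, X i ω‖ ≤ Rfun X M ω := hS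
    _ = Real.sqrt (g M ω) * Real.sqrt (d M) := hRfactor
    _ ≤ Real.sqrt (g M ω) * ((Real.sqrt 2 * (n:ℝ)^((1:ℝ)/2)) * (K2^p * Real.log n ^ p)) := by
        rw [hsplit]
        refine mul_le_mul_of_nonneg_left ?_ (Real.sqrt_nonneg _)
        exact mul_le_mul hsq2M hMp (by positivity) (by positivity)
    _ = K * Real.sqrt (g M ω) * ((n:ℝ)^((1:ℝ)/2) * Real.log n ^ p) := by
        rw [hKdef]; ring

end Main

/-- The `α = 0` case of the quasi law of the iterated logarithm: pairwise
uncorrelated centered complex random variables with uniformly bounded variances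
satisfy `S n = o(n^(1/2) (log n)^(3/2+ε))` almost surely. -/
theorem stmt_6 {Ω : Type*} [MeasurableSpace Ω] (P : Measure Ω) [IsProbabilityMeasure P]
    (X : ℕ → Ω → ℂ) (C : ℝ)
    (hL2 : ∀ i, MemLp (X i) 2 P)
    (hmean : ∀ i, ∫ ω, X i ω ∂P = 0)
    (hvar : ∀ i, ∫ ω, ‖X i ω‖ ^ 2 ∂P ≤ C)
    (huncorr : ∀ i j, i ≠ j → ∫ ω, (starRingEnd ℂ) (X i ω) * X j ω ∂P = 0)
    (ε : ℝ) (hε : 0 < ε) :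
    ∀ᵐ ω ∂P, Tendsto
      (fun n : ℕ => (∑ i ∈ Finset.Icc 1 n, X i ω) /
        ((((n : ℝ) ^ ((1:ℝ)/2) * Real.log n ^ ((3:ℝ)/2 + ε) : ℝ)) : ℂ))
      atTop (𝓝 0) := by
  exact main X C hL2 hvar huncorr ε hε
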